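/- For the action of G^T on the set X of marked-leaf classes, the pointwise stabiliser of a k-element subset A = {[t,1],…,[t,k]} (t a tree with k leaves) is isomorphic to G^k, via the map sending (f_i∘h_i^{-1})_{i=1}^k to (t∘f)∘(t∘h)^{-1} where f = (f_1,…,f_k) and h = (h_1,…,h_k); an element t∘f∘π∘(t∘h)^{-1} fixes every point of A iff π is trivial and the i-th trees of f and h have equal numbers of leaves for each i. -/

import Mathlib

namespace ForestSkein

/-- A coloured finite rooted planar binary tree with colours in `S`. -/
inductive CTree (S : Type) : Type
  | leaf : CTree S
  | node : S → CTree S → CTree S → CTree S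

namespace CTree

/-- Number of leaves of a coloured binary tree. -/
def leaves {S : Type} : CTree S → ℕ
  | .leaf => 1
  | .node _ l r => leaves l + leaves r

/-- Graft a list of trees onto the leaves of a tree (vertical stacking). -/
def graft {S : Type} : CTree S → List (CTree S) → CTree S
  | .leaf, gs => gs.headD .leaf
  | .node c l r, gs => .node c (graft l (gs.take (leaves l))) (graft r (gs.drop (leaves l)))

/-- Relabel the colours of a tree along a map of colour sets. -/
def recolour {S S' : Type} (c : S → S') : CTree S → CTree S'
  | .leaf => .leaf
  | .node x l r => .node (c x) (recolour c l) (recolour c r)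

end CTree

/-- A coloured forest: a finite list of coloured binary trees.  Its roots are the
entries of the list, its leaves are the leaves of its trees. -/
abbrev Forest (S : Type) := List (CTree S)

/-- Total number of leaves of a forest. -/
def Forest.leaves {S : Type} (f : Forest S) : ℕ := (f.map CTree.leaves).sum

/-- Composition of forests: `Forest.comp f g` stacks `g` on top of `f`, attaching
the `j`-th root of `g` to the `j`-th leaf of `f` (meaningful when
`Forest.leaves f = g.length`). -/
def Forest.comp {S : Type} : Forest S → Forest S → Forest S
  | [], _ => []
  | t :: ts, g =>
      CTree.graft t (g.take (CTree.leaves t)) :: Forest.comp ts (g.drop (CTree.leaves t))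

/-- The elementary forest `a_{j,n}` (1-indexed) with `n` roots, a single `a`-coloured
caret at the `j`-th root, and all other trees trivial. -/
def elemForest {S : Type} (a : S) (j n : ℕ) : Forest S :=
  List.replicate (j - 1) CTree.leaf ++ [CTree.node a CTree.leaf CTree.leaf] ++
    List.replicate (n - j) CTree.leaf

/-- A set of skein relations consists of pairs of trees with equal numbers of leaves. -/
def LeafPres {S : Type} (R : CTree S → CTree S → Prop) : Prop :=
  ∀ t t' : CTree S, R t t' → CTree.leaves t = CTree.leaves t'

/-- The equivalence relation on coloured forests generated by a set `R` of skein
relations (pairs of trees), closed under composition and tensor product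
(horizontal juxtaposition).  The quotient is the forest-skein category
presented by `R`. -/
inductive SkeinEquiv {S : Type} (R : CTree S → CTree S → Prop) : Forest S → Forest S → Prop
  | of {t t' : CTree S} : R t t' → SkeinEquiv R [t] [t']
  | refl (f : Forest S) : SkeinEquiv R f f
  | symm {f g : Forest S} : SkeinEquiv R f g → SkeinEquiv R g f
  | trans {f g h : Forest S} : SkeinEquiv R f g → SkeinEquiv R g h → SkeinEquiv R f h
  | comp {f f' g g' : Forest S} :
      SkeinEquiv R f f' → SkeinEquiv R g g' → SkeinEquiv R (Forest.comp f g) (Forest.comp f' g')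
  | tensor {f f' g g' : Forest S} :
      SkeinEquiv R f f' → SkeinEquiv R g g' → SkeinEquiv R (f ++ g) (f' ++ g')

/-- Left-cancellativity of a forest-skein category given by the equivalence `E` on
forests: `f ∘ g = f ∘ h` implies `g = h`. -/
def LeftCancel {S : Type} (E : Forest S → Forest S → Prop) : Prop :=
  ∀ f g h : Forest S, Forest.leaves f = g.length → Forest.leaves f = h.length →
    E (Forest.comp f g) (Forest.comp f h) → E g h

/-- Ore's property for the forest-skein category given by the equivalence `E`:
any two forests with the same number of roots admit a common right multiple. -/
def OreProp {S : Type} (E : Forest S → Forest S → Prop) : Prop :=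
  ∀ f g : Forest S, f.length = g.length →
    ∃ p q : Forest S, Forest.leaves f = p.length ∧ Forest.leaves g = q.length ∧
      E (Forest.comp f p) (Forest.comp g q)

/-- Equality of the fractions `t ∘ s⁻¹` and `t' ∘ s'⁻¹` in the fraction group:
there are forests `f, f'` with `t ∘ f = t' ∘ f'` and `s ∘ f = s' ∘ f'` modulo `E`. -/
def FracRel {S : Type} (E : Forest S → Forest S → Prop) (t s t' s' : CTree S) : Prop :=
  ∃ f f' : Forest S, CTree.leaves t = f.length ∧ CTree.leaves t' = f'.length ∧
    E [CTree.graft t f] [CTree.graft t' f'] ∧ E [CTree.graft s f] [CTree.graft s' f']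

/-- `leafPos f j` is the (0-indexed) index `j^f` of the first leaf of the `j`-th tree
of the forest `f` among all leaves of `f`. -/
def leafPos {S : Type} (f : Forest S) (j : ℕ) : ℕ := Forest.leaves (f.take j)

/-- Generating relation for the set `X` of marked-leaf classes `[t, j]`:
skein equivalence of the underlying trees, and growth `(t, j) ~ (t ∘ f, j^f)`. -/
inductive MLRel {S : Type} (E : Forest S → Forest S → Prop) :
    CTree S × ℕ → CTree S × ℕ → Prop
  | skein {t t' : CTree S} {j : ℕ} : E [t] [t'] → MLRel E (t, j) (t', j)
  | grow (t : CTree S) (f : Forest S) (j : ℕ) (hf : CTree.leaves t = f.length) :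
      MLRel E (t, j) (CTree.graft t f, leafPos f j)

/-- Equality of marked-leaf classes in `X`. -/
def MLEquiv {S : Type} (E : Forest S → Forest S → Prop) :
    CTree S × ℕ → CTree S × ℕ → Prop :=
  Relation.EqvGen (MLRel E)

/-- The total order `⪯` on marked leaves: `[t, j] ⪯ [t', j']` when for some pair of
forests with `t ∘ f = t' ∘ f'` (modulo `E`) one has `j^f ≤ j'^{f'}`. -/
def MLLe {S : Type} (E : Forest S → Forest S → Prop) (p q : CTree S × ℕ) : Prop :=
  ∃ f f' : Forest S, CTree.leaves p.1 = f.length ∧ CTree.leaves q.1 = f'.length ∧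
    E [CTree.graft p.1 f] [CTree.graft q.1 f'] ∧ leafPos f p.2 ≤ leafPos f' q.2


section Lemmas
variable {S : Type}

open CTree

lemma leaves_pos (t : CTree S) : 1 ≤ t.leaves := by
  induction t with
  | leaf => simp [CTree.leaves]
  | node c l r ihl ihr => simp only [CTree.leaves]; omega

lemma Forest.leaves_nil : Forest.leaves ([] : Forest S) = 0 := rfl

lemma Forest.leaves_cons (t : CTree S) (f : Forest S) :
    Forest.leaves (t :: f) = t.leaves + Forest.leaves f := by
  simp [Forest.leaves]

lemma Forest.leaves_append (f g : Forest S) :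
    Forest.leaves (f ++ g) = Forest.leaves f + Forest.leaves g := by
  simp [Forest.leaves]

lemma Forest.leaves_singleton (t : CTree S) : Forest.leaves [t] = t.leaves := by
  simp [Forest.leaves]

lemma Forest.leaves_take_add (g : Forest S) (m n : ℕ) :
    Forest.leaves (g.take (m + n)) =
      Forest.leaves (g.take m) + Forest.leaves ((g.drop m).take n) := by
  rw [List.take_add, Forest.leaves_append]

lemma length_le_leaves (f : Forest S) : f.length ≤ Forest.leaves f := by
  induction f with
  | nil => simp
  | cons t ts ih =>
    have := leaves_pos t
    simp only [List.length_cons, Forest.leaves_cons]; omega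

lemma graft_take (t : CTree S) (g : Forest S) :
    CTree.graft t (g.take t.leaves) = CTree.graft t g := by
  induction t generalizing g with
  | leaf => cases g <;> simp [CTree.graft, CTree.leaves]
  | node c l r ihl ihr =>
    simp only [CTree.graft, CTree.leaves, List.take_take, List.drop_take]
    rw [inf_of_le_left (Nat.le_add_right _ _), Nat.add_sub_cancel_left, ihr]

lemma leaves_graft (t : CTree S) (g : Forest S) :
    (CTree.graft t g).leaves = Forest.leaves (g.take t.leaves) + (t.leaves - g.length) := by
  induction t generalizing g with
  | leaf =>
    cases g with
    | nil => simp [CTree.graft, CTree.leaves, Forest.leaves]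
    | cons a l => simp [CTree.graft, CTree.leaves, Forest.leaves]
  | node c l r ihl ihr =>
    simp only [CTree.graft, CTree.leaves, ihl, ihr, List.take_take, inf_idem]
    rw [Forest.leaves_take_add g l.leaves r.leaves]
    have h1 : (g.take l.leaves).length = min l.leaves g.length := List.length_take
    have h2 : (g.drop l.leaves).length = g.length - l.leaves := List.length_drop
    omega

lemma leaves_graft' (t : CTree S) (g : Forest S) (h : t.leaves = g.length) :
    (CTree.graft t g).leaves = Forest.leaves g := by
  rw [leaves_graft, h, List.take_length]; omega

lemma length_comp (f g : Forest S) : (Forest.comp f g).length = f.length := by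
  induction f generalizing g with
  | nil => rfl
  | cons t ts ih => simp [Forest.comp, ih]

lemma comp_take (f g : Forest S) (n : ℕ) :
    (Forest.comp f g).take n = Forest.comp (f.take n)
      (g.take (Forest.leaves (f.take n))) := by
  induction f generalizing g n with
  | nil => simp [Forest.comp]
  | cons t ts ih =>
    cases n with
    | zero => simp [Forest.comp]
    | succ m =>
      simp only [Forest.comp, List.take_succ_cons, Forest.leaves_cons, ih, List.take_take,
        List.drop_take]
      rw [inf_of_le_left (Nat.le_add_right _ _), Nat.add_sub_cancel_left]

lemma comp_drop (f g : Forest S) (n : ℕ) :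
    (Forest.comp f g).drop n = Forest.comp (f.drop n)
      (g.drop (Forest.leaves (f.take n))) := by
  induction f generalizing g n with
  | nil => simp [Forest.comp]
  | cons t ts ih =>
    cases n with
    | zero => simp [Forest.comp, Forest.leaves]
    | succ m =>
      simp only [Forest.comp, List.drop_succ_cons, List.take_succ_cons, Forest.leaves_cons,
        ih, List.drop_drop]

lemma graft_graft (t : CTree S) (f p : Forest S) (h : t.leaves = f.length) :
    CTree.graft (CTree.graft t f) p = CTree.graft t (Forest.comp f p) := by
  induction t generalizing f p with
  | leaf =>
    match f, h with
    | [f0], _ =>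
      show CTree.graft f0 p = _
      simp only [Forest.comp, CTree.graft, List.headD]
      exact (graft_take f0 p).symm
  | node c l r ihl ihr =>
    simp only [CTree.leaves] at h
    have hl : l.leaves = (f.take l.leaves).length := by
      rw [List.length_take]; omega
    have hr : r.leaves = (f.drop l.leaves).length := by
      rw [List.length_drop]; omega
    simp only [CTree.graft, CTree.leaves]
    rw [leaves_graft' l _ hl, ihl _ _ hl, ihr _ _ hr, comp_take, comp_drop]

lemma graft_replicate (t : CTree S) (n : ℕ) :
    CTree.graft t (List.replicate n CTree.leaf) = t := by
  induction t generalizing n with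
  | leaf => cases n <;> simp [CTree.graft, List.replicate_succ]
  | node c l r ihl ihr =>
    simp [CTree.graft, List.take_replicate, List.drop_replicate, ihl, ihr]

lemma leaves_comp (f g : Forest S) :
    Forest.leaves (Forest.comp f g) =
      Forest.leaves (g.take (Forest.leaves f)) + (Forest.leaves f - g.length) := by
  induction f generalizing g with
  | nil => simp [Forest.comp, Forest.leaves]
  | cons t ts ih =>
    simp only [Forest.comp, Forest.leaves_cons, ih, leaves_graft, List.take_take, inf_idem]
    rw [Forest.leaves_take_add g t.leaves (Forest.leaves ts)]
    have h1 : (g.take t.leaves).length = min t.leaves g.length := List.length_take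
    have h2 : (g.drop t.leaves).length = g.length - t.leaves := List.length_drop
    omega
end Lemmas

section Lemmas2
variable {S : Type} {R : CTree S → CTree S → Prop}

open CTree

lemma leafPos_zero (f : Forest S) : leafPos f 0 = 0 := rfl

lemma leafPos_succ (f : Forest S) (i : ℕ) (hi : i < f.length) :
    leafPos f (i + 1) = leafPos f i + (f.getD i CTree.leaf).leaves := by
  unfold leafPos
  rw [← List.take_concat_get hi, List.concat_eq_append, Forest.leaves_append,
    Forest.leaves_singleton, List.getD_eq_getElem _ _ hi]

lemma leafPos_le (f : Forest S) {i j : ℕ} (h : i ≤ j) : leafPos f i ≤ leafPos f j := by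
  obtain ⟨d, rfl⟩ := Nat.exists_eq_add_of_le h
  unfold leafPos
  rw [Forest.leaves_take_add]
  omega

lemma leafPos_le_leaves (f : Forest S) (i : ℕ) : leafPos f i ≤ Forest.leaves f := by
  have := leafPos_le f (Nat.le_add_right i (f.length))
  calc leafPos f i ≤ leafPos f (i + f.length) := leafPos_le f (by omega)
    _ ≤ _ := by
      unfold leafPos
      rw [List.take_of_length_le (by omega)]

lemma leafPos_length (f : Forest S) : leafPos f f.length = Forest.leaves f := by
  unfold leafPos; rw [List.take_length]

lemma leafPos_lt (f : Forest S) {i j : ℕ} (hij : i < j) (hj : j ≤ f.length) :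
    leafPos f i < leafPos f j := by
  calc leafPos f i < leafPos f (i+1) := by
        rw [leafPos_succ f i (by omega)]
        have := leaves_pos (f.getD i CTree.leaf)
        omega
    _ ≤ leafPos f j := leafPos_le f (by omega)

lemma leafPos_inj (f : Forest S) {i j : ℕ} (hi : i ≤ f.length) (hj : j ≤ f.length)
    (h : leafPos f i = leafPos f j) : i = j := by
  rcases Nat.lt_trichotomy i j with hc | hc | hc
  · exact absurd h (Nat.ne_of_lt (leafPos_lt f hc hj))
  · exact hc
  · exact absurd h.symm (Nat.ne_of_lt (leafPos_lt f hc hi))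

lemma leafPos_map_eq {f g : Forest S} (h : f.map CTree.leaves = g.map CTree.leaves)
    (i : ℕ) : leafPos f i = leafPos g i := by
  unfold leafPos Forest.leaves
  rw [List.map_take, List.map_take, h]

lemma leafPos_comp (f g : Forest S) (i : ℕ) (hg : Forest.leaves f ≤ g.length) :
    leafPos (Forest.comp f g) i = leafPos g (leafPos f i) := by
  unfold leafPos
  rw [comp_take, leaves_comp]
  have h1 : Forest.leaves (f.take i) ≤ Forest.leaves f := leafPos_le_leaves f i
  rw [List.take_take, inf_of_le_left (by omega), List.length_take]
  omega

/-- The pattern (list of per-tree leaf numbers) is invariant under skein equivalence. -/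
def compPat : List ℕ → List ℕ → List ℕ
  | [], _ => []
  | n :: a, b => ((b.take n).sum + (n - b.length)) :: compPat a (b.drop n)

lemma map_leaves_comp (f g : Forest S) :
    (Forest.comp f g).map CTree.leaves = compPat (f.map CTree.leaves) (g.map CTree.leaves) := by
  induction f generalizing g with
  | nil => rfl
  | cons t ts ih =>
    simp only [Forest.comp, List.map_cons, compPat, ih, List.map_drop]
    congr 1
    rw [leaves_graft, List.take_take, inf_idem]
    unfold Forest.leaves
    rw [List.map_take, List.length_take, List.length_map]
    omega

lemma skein_pattern (hR : LeafPres R) {f g : Forest S} (h : SkeinEquiv R f g) :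
    f.map CTree.leaves = g.map CTree.leaves := by
  induction h with
  | of hr => simp [hR _ _ hr]
  | refl f => rfl
  | symm _ ih => exact ih.symm
  | trans _ _ ih1 ih2 => exact ih1.trans ih2
  | comp _ _ ih1 ih2 => rw [map_leaves_comp, map_leaves_comp, ih1, ih2]
  | tensor _ _ ih1 ih2 => rw [List.map_append, List.map_append, ih1, ih2]

lemma skein_length (hR : LeafPres R) {f g : Forest S} (h : SkeinEquiv R f g) :
    f.length = g.length := by
  have := congrArg List.length (skein_pattern hR h)
  simpa using this

lemma skein_leaves (hR : LeafPres R) {f g : Forest S} (h : SkeinEquiv R f g) :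
    Forest.leaves f = Forest.leaves g := by
  unfold Forest.leaves
  rw [skein_pattern hR h]

lemma skein_tree_leaves (hR : LeafPres R) {t t' : CTree S}
    (h : SkeinEquiv R [t] [t']) : t.leaves = t'.leaves := by
  have := skein_leaves hR h
  simpa [Forest.leaves_singleton] using this

end Lemmas2

section Lemmas3
variable {S : Type} {R : CTree S → CTree S → Prop}

open CTree

lemma skein_split (hR : LeafPres R) {f g : Forest S} (h : SkeinEquiv R f g) (n : ℕ) :
    SkeinEquiv R (f.take n) (g.take n) ∧ SkeinEquiv R (f.drop n) (g.drop n) := by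
  induction h generalizing n with
  | @of t t' hr =>
    cases n with
    | zero => exact ⟨.refl _, .of hr⟩
    | succ m =>
      constructor
      · simpa using SkeinEquiv.of hr
      · simp only [List.drop_succ_cons, List.drop_nil]
        exact .refl _
  | refl f => exact ⟨.refl _, .refl _⟩
  | symm _ ih => exact ⟨(ih n).1.symm, (ih n).2.symm⟩
  | trans _ _ ih1 ih2 => exact ⟨(ih1 n).1.trans (ih2 n).1, (ih1 n).2.trans (ih2 n).2⟩
  | @comp f f' g g' h1 h2 ih1 ih2 =>
    have hpat : f.map CTree.leaves = f'.map CTree.leaves := skein_pattern hR h1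
    have hL : Forest.leaves (f.take n) = Forest.leaves (f'.take n) := leafPos_map_eq hpat n
    rw [comp_take, comp_take, comp_drop, comp_drop, ← hL]
    exact ⟨.comp (ih1 n).1 (ih2 _).1, .comp (ih1 n).2 (ih2 _).2⟩
  | @tensor f f' g g' h1 h2 ih1 ih2 =>
    have hlen : f.length = f'.length := skein_length hR h1
    rw [List.take_append, List.take_append,
      List.drop_append, List.drop_append, ← hlen]
    exact ⟨.tensor (ih1 n).1 (ih2 _).1, .tensor (ih1 n).2 (ih2 _).2⟩

lemma skein_getD (hR : LeafPres R) {f g : Forest S} (h : SkeinEquiv R f g) {i : ℕ}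
    (hi : i < f.length) :
    SkeinEquiv R [f.getD i CTree.leaf] [g.getD i CTree.leaf] := by
  have hig : i < g.length := skein_length hR h ▸ hi
  have h1 := ((skein_split hR h i).2)
  have h2 := (skein_split hR h1 1).1
  have e1 : (f.drop i).take 1 = [f.getD i CTree.leaf] := by
    rw [List.drop_eq_getElem_cons hi, List.take_succ_cons, List.take_zero,
      List.getD_eq_getElem _ _ hi]
  have e2 : (g.drop i).take 1 = [g.getD i CTree.leaf] := by
    rw [List.drop_eq_getElem_cons hig, List.take_succ_cons, List.take_zero,
      List.getD_eq_getElem _ _ hig]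
  rw [e1, e2] at h2
  exact h2

lemma skein_cons {a b : CTree S} {as bs : Forest S} (h1 : SkeinEquiv R [a] [b])
    (h2 : SkeinEquiv R as bs) : SkeinEquiv R (a :: as) (b :: bs) :=
  SkeinEquiv.tensor h1 h2

lemma comp_singleton (t : CTree S) (p : Forest S) :
    Forest.comp [t] p = [CTree.graft t p] := by
  simp only [Forest.comp, graft_take]

lemma comp_getD (f g : Forest S) (i : ℕ) (hi : i < f.length) :
    (Forest.comp f g).getD i CTree.leaf =
      CTree.graft (f.getD i CTree.leaf)
        ((g.drop (leafPos f i)).take (f.getD i CTree.leaf).leaves) := by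
  induction f generalizing g i with
  | nil => simp at hi
  | cons t ts ih =>
    cases i with
    | zero =>
      simp only [Forest.comp, List.getD_cons_zero, leafPos_zero, List.drop_zero]
    | succ m =>
      have hlp : leafPos (t :: ts) (m+1) = t.leaves + leafPos ts m := by
        unfold leafPos
        rw [List.take_succ_cons, Forest.leaves_cons]
      simp only [Forest.comp, List.getD_cons_succ, hlp]
      rw [ih _ m (by simpa using hi), List.drop_drop]

/-- An element of `G^T` written `t ∘ f ∘ π ∘ (t∘h)⁻¹` composes: key cancellation step. -/
lemma skein_cancel_t (hLC : LeftCancel (SkeinEquiv R)) (t : CTree S) (p q : Forest S)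
    (hp : t.leaves = p.length) (hq : t.leaves = q.length)
    (h : SkeinEquiv R [CTree.graft t p] [CTree.graft t q]) : SkeinEquiv R p q := by
  apply hLC [t] p q (by rwa [Forest.leaves_singleton]) (by rwa [Forest.leaves_singleton])
  rwa [comp_singleton, comp_singleton]

end Lemmas3

section Lemmas4
variable {S : Type} {R : CTree S → CTree S → Prop}

open CTree

lemma skein_graft_ext {s s' : CTree S} (h : SkeinEquiv R [s] [s']) (u : Forest S) :
    SkeinEquiv R [CTree.graft s u] [CTree.graft s' u] := by
  have := SkeinEquiv.comp h (SkeinEquiv.refl u)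
  rwa [comp_singleton, comp_singleton] at this

lemma ore_tree (hOre : OreProp (SkeinEquiv R)) (s s' : CTree S) :
    ∃ p p' : Forest S, s.leaves = p.length ∧ s'.leaves = p'.length ∧
      SkeinEquiv R [CTree.graft s p] [CTree.graft s' p'] := by
  obtain ⟨p, p', h1, h2, h3⟩ := hOre [s] [s'] rfl
  rw [comp_singleton, comp_singleton] at h3
  rw [Forest.leaves_singleton] at h1 h2
  exact ⟨p, p', h1, h2, h3⟩

lemma leaves_replicate (n : ℕ) :
    Forest.leaves (List.replicate n (CTree.leaf : CTree S)) = n := by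
  simp [Forest.leaves, List.map_replicate, CTree.leaves]

lemma leafPos_replicate (n j : ℕ) :
    leafPos (List.replicate n (CTree.leaf : CTree S)) j = min j n := by
  unfold leafPos
  rw [List.take_replicate, leaves_replicate]

/-- Leaf counts of the refining forests agree across a skein equivalence of grafts. -/
lemma graft_skein_leaves (hR : LeafPres R) {s s' : CTree S} {p p' : Forest S}
    (hp : s.leaves = p.length) (hp' : s'.leaves = p'.length)
    (E1 : SkeinEquiv R [CTree.graft s p] [CTree.graft s' p']) :
    Forest.leaves p = Forest.leaves p' := by
  have := skein_tree_leaves hR E1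
  rwa [leaves_graft' _ _ hp, leaves_graft' _ _ hp'] at this

/-- Coherence: equality of marked-leaf positions does not depend on the chosen
common refinement. -/
lemma ml_coherence (hR : LeafPres R) (hLC : LeftCancel (SkeinEquiv R))
    (hOre : OreProp (SkeinEquiv R)) {s s' : CTree S} {p p' w w' : Forest S}
    (hp : s.leaves = p.length) (hp' : s'.leaves = p'.length)
    (hw : s.leaves = w.length) (hw' : s'.leaves = w'.length)
    (Ep : SkeinEquiv R [CTree.graft s p] [CTree.graft s' p'])
    (Ew : SkeinEquiv R [CTree.graft s w] [CTree.graft s' w'])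
    {j j' : ℕ} (hjj : leafPos p j = leafPos p' j') :
    leafPos w j = leafPos w' j' := by
  obtain ⟨u, v, hu, hv, Euv⟩ := ore_tree hOre (CTree.graft s p) (CTree.graft s w)
  rw [leaves_graft' _ _ hp] at hu
  rw [leaves_graft' _ _ hw] at hv
  rw [graft_graft _ _ _ hp, graft_graft _ _ _ hw] at Euv
  -- cancel s on the left
  have Ecan : SkeinEquiv R (Forest.comp p u) (Forest.comp w v) :=
    skein_cancel_t hLC s _ _ (by rw [length_comp]; exact hp) (by rw [length_comp]; exact hw) Euv
  have pos1 : leafPos u (leafPos p j) = leafPos v (leafPos w j) := by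
    have := leafPos_map_eq (skein_pattern hR Ecan) j
    rwa [leafPos_comp p u j (le_of_eq hu), leafPos_comp w v j (le_of_eq hv)] at this
  -- the s' side
  have Ep' : SkeinEquiv R [CTree.graft s (Forest.comp p u)] [CTree.graft s' (Forest.comp p' u)] := by
    have := skein_graft_ext Ep u
    rwa [graft_graft _ _ _ hp, graft_graft _ _ _ hp'] at this
  have Ew' : SkeinEquiv R [CTree.graft s (Forest.comp w v)] [CTree.graft s' (Forest.comp w' v)] := by
    have := skein_graft_ext Ew v
    rwa [graft_graft _ _ _ hw, graft_graft _ _ _ hw'] at this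
  have Echain : SkeinEquiv R (Forest.comp p' u) (Forest.comp w' v) := by
    refine skein_cancel_t hLC s' _ _ (by rw [length_comp]; exact hp')
      (by rw [length_comp]; exact hw') ?_
    exact (Ep'.symm.trans Euv).trans Ew'
  have hpp' : Forest.leaves p = Forest.leaves p' := graft_skein_leaves hR hp hp' Ep
  have hww' : Forest.leaves w = Forest.leaves w' := graft_skein_leaves hR hw hw' Ew
  have pos2 : leafPos u (leafPos p' j') = leafPos v (leafPos w' j') := by
    have := leafPos_map_eq (skein_pattern hR Echain) j'
    rwa [leafPos_comp p' u j' (by omega), leafPos_comp w' v j' (by omega)] at this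
  have : leafPos v (leafPos w j) = leafPos v (leafPos w' j') := by
    rw [← pos1, hjj, pos2]
  refine leafPos_inj v ?_ ?_ this
  · rw [← hv]; exact leafPos_le_leaves w j
  · rw [← hv, hww']; exact leafPos_le_leaves w' j'

/-- Existence of a common refinement witnessing equality of positions. -/
def MLWitness (R : CTree S → CTree S → Prop) (x y : CTree S × ℕ) : Prop :=
  ∃ p p' : Forest S, x.1.leaves = p.length ∧ y.1.leaves = p'.length ∧
    SkeinEquiv R [CTree.graft x.1 p] [CTree.graft y.1 p'] ∧ leafPos p x.2 = leafPos p' y.2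

lemma mlwitness_refl (x : CTree S × ℕ) : MLWitness R x x := by
  refine ⟨List.replicate x.1.leaves CTree.leaf, List.replicate x.1.leaves CTree.leaf,
    by rw [List.length_replicate], by rw [List.length_replicate], ?_, rfl⟩
  rw [graft_replicate]
  exact SkeinEquiv.refl _

lemma mlwitness_symm {x y : CTree S × ℕ} (h : MLWitness R x y) : MLWitness R y x := by
  obtain ⟨p, p', h1, h2, h3, h4⟩ := h
  exact ⟨p', p, h2, h1, h3.symm, h4.symm⟩

lemma mlwitness_trans (hR : LeafPres R) (hLC : LeftCancel (SkeinEquiv R))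
    (hOre : OreProp (SkeinEquiv R)) {x y z : CTree S × ℕ}
    (h1 : MLWitness R x y) (h2 : MLWitness R y z) : MLWitness R x z := by
  obtain ⟨p, p', hp, hp', E1, pos1⟩ := h1
  obtain ⟨w', w'', hw', hw'', E2, pos2⟩ := h2
  obtain ⟨u, v, hu, hv, Euv⟩ := ore_tree hOre (CTree.graft y.1 p') (CTree.graft y.1 w')
  rw [leaves_graft' _ _ hp'] at hu
  rw [leaves_graft' _ _ hw'] at hv
  rw [graft_graft _ _ _ hp', graft_graft _ _ _ hw'] at Euv
  have Ecan : SkeinEquiv R (Forest.comp p' u) (Forest.comp w' v) :=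
    skein_cancel_t hLC y.1 _ _ (by rw [length_comp]; exact hp')
      (by rw [length_comp]; exact hw') Euv
  have hpp' : Forest.leaves p = Forest.leaves p' := graft_skein_leaves hR hp hp' E1
  have hw'w'' : Forest.leaves w' = Forest.leaves w'' := graft_skein_leaves hR hw' hw'' E2
  have posmid : leafPos u (leafPos p' y.2) = leafPos v (leafPos w' y.2) := by
    have := leafPos_map_eq (skein_pattern hR Ecan) y.2
    rwa [leafPos_comp p' u y.2 (le_of_eq hu), leafPos_comp w' v y.2 (le_of_eq hv)] at this
  have E1' : SkeinEquiv R [CTree.graft x.1 (Forest.comp p u)]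
      [CTree.graft y.1 (Forest.comp p' u)] := by
    have := skein_graft_ext E1 u
    rwa [graft_graft _ _ _ hp, graft_graft _ _ _ hp'] at this
  have E2' : SkeinEquiv R [CTree.graft y.1 (Forest.comp w' v)]
      [CTree.graft z.1 (Forest.comp w'' v)] := by
    have := skein_graft_ext E2 v
    rwa [graft_graft _ _ _ hw', graft_graft _ _ _ hw''] at this
  refine ⟨Forest.comp p u, Forest.comp w'' v, by rw [length_comp]; exact hp,
    by rw [length_comp]; exact hw'', ?_, ?_⟩
  · rw [← graft_graft _ _ _ hp, ← graft_graft _ _ _ hw'']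
    rw [graft_graft _ _ _ hp, graft_graft _ _ _ hw'']
    exact (E1'.trans Euv).trans E2'
  · rw [leafPos_comp p u x.2 (by omega), leafPos_comp w'' v z.2 (by omega),
      pos1, posmid, pos2]

lemma mlequiv_witness (hR : LeafPres R) (hLC : LeftCancel (SkeinEquiv R))
    (hOre : OreProp (SkeinEquiv R)) {x y : CTree S × ℕ}
    (h : MLEquiv (SkeinEquiv R) x y) : MLWitness R x y := by
  induction h with
  | rel x y hxy =>
    cases hxy with
    | @skein t t' j hE =>
      refine ⟨List.replicate t.leaves CTree.leaf, List.replicate t'.leaves CTree.leaf,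
        by rw [List.length_replicate], by rw [List.length_replicate], ?_, ?_⟩
      · rw [graft_replicate, graft_replicate]; exact hE
      · rw [leafPos_replicate, leafPos_replicate, skein_tree_leaves hR hE]
    | grow t f j hf =>
      refine ⟨f, List.replicate (CTree.graft t f).leaves CTree.leaf, hf,
        by rw [List.length_replicate], ?_, ?_⟩
      · rw [graft_replicate]; exact SkeinEquiv.refl _
      · dsimp only
        rw [leafPos_replicate, leaves_graft' _ _ hf]
        have := leafPos_le_leaves f j
        omega
  | refl x => exact mlwitness_refl x
  | symm _ _ _ ih => exact mlwitness_symm ih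
  | trans _ _ _ _ _ ih1 ih2 => exact mlwitness_trans hR hLC hOre ih1 ih2

/-- Main invariant: positions agree at every common refinement of `MLEquiv`-related
marked trees. -/
lemma mlequiv_pos (hR : LeafPres R) (hLC : LeftCancel (SkeinEquiv R))
    (hOre : OreProp (SkeinEquiv R)) {x y : CTree S × ℕ}
    (h : MLEquiv (SkeinEquiv R) x y) {p p' : Forest S}
    (hp : x.1.leaves = p.length) (hp' : y.1.leaves = p'.length)
    (hE : SkeinEquiv R [CTree.graft x.1 p] [CTree.graft y.1 p']) :
    leafPos p x.2 = leafPos p' y.2 := by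
  obtain ⟨a, b, ha, hb, hEab, hpos⟩ := mlequiv_witness hR hLC hOre h
  exact ml_coherence hR hLC hOre ha hb hp hp' hEab hE hpos

end Lemmas4

section Lemmas5
variable {S : Type} {R : CTree S → CTree S → Prop}

open CTree

lemma leafPos_congr {f h : Forest S} (hlen : f.length = h.length)
    (hleaf : ∀ i, i < f.length → (f.getD i CTree.leaf).leaves = (h.getD i CTree.leaf).leaves) :
    ∀ j, j ≤ f.length → leafPos f j = leafPos h j := by
  intro j
  induction j with
  | zero => intro _; rfl
  | succ m ih =>
    intro hj
    rw [leafPos_succ f m (by omega), leafPos_succ h m (by omega), ih (by omega),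
      hleaf m (by omega)]

lemma skein_graft_congr {t : CTree S} {X Y : Forest S} (h : SkeinEquiv R X Y) :
    SkeinEquiv R [CTree.graft t X] [CTree.graft t Y] := by
  have := SkeinEquiv.comp (SkeinEquiv.refl [t]) h
  rwa [comp_singleton, comp_singleton] at this

lemma frac_join : ∀ (f h f' h' : Forest S), f.length = h.length → f.length = f'.length →
    f.length = h'.length →
    (∀ i, i < f.length → (f.getD i CTree.leaf).leaves = (h.getD i CTree.leaf).leaves) →
    (∀ i, i < f.length → (f'.getD i CTree.leaf).leaves = (h'.getD i CTree.leaf).leaves) →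
    (∀ i, i < f.length → FracRel (SkeinEquiv R) (f.getD i CTree.leaf) (h.getD i CTree.leaf)
      (f'.getD i CTree.leaf) (h'.getD i CTree.leaf)) →
    ∃ G G' : Forest S, Forest.leaves f = G.length ∧ Forest.leaves f' = G'.length ∧
      SkeinEquiv R (Forest.comp f G) (Forest.comp f' G') ∧
      SkeinEquiv R (Forest.comp h G) (Forest.comp h' G') := by
  intro f
  induction f with
  | nil =>
    intro h f' h' h1 h2 h3 _ _ _
    have : h = [] := List.length_eq_zero_iff.mp h1.symm
    have : f' = [] := List.length_eq_zero_iff.mp h2.symm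
    have : h' = [] := List.length_eq_zero_iff.mp h3.symm
    subst_vars
    exact ⟨[], [], rfl, rfl, .refl _, .refl _⟩
  | cons a as ih =>
    intro h f' h' h1 h2 h3 hleaf hleaf' hrel
    match h, f', h', h1, h2, h3 with
    | b :: bs, a' :: as', b' :: bs', h1, h2, h3 =>
      obtain ⟨g, g', hg, hg', Eg1, Eg2⟩ := hrel 0 (by simp)
      simp only [List.getD_cons_zero] at hg hg' Eg1 Eg2
      obtain ⟨G, G', hG, hG', EG1, EG2⟩ := ih bs as' bs' (by simpa using h1)
        (by simpa using h2) (by simpa using h3)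
        (fun i hi => by simpa using hleaf (i+1) (by simpa using Nat.succ_lt_succ hi))
        (fun i hi => by simpa using hleaf' (i+1) (by simpa using Nat.succ_lt_succ hi))
        (fun i hi => by simpa using hrel (i+1) (by simpa using Nat.succ_lt_succ hi))
      have hb : b.leaves = g.length := by
        rw [← hg]; exact (hleaf 0 (by simp)).symm ▸ rfl
      have hb' : b'.leaves = g'.length := by
        rw [← hg']; exact (hleaf' 0 (by simp)).symm ▸ rfl
      refine ⟨g ++ G, g' ++ G', ?_, ?_, ?_, ?_⟩
      · rw [Forest.leaves_cons, List.length_append, hG, hg]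
      · rw [Forest.leaves_cons, List.length_append, hG', hg']
      · simp only [Forest.comp]
        rw [hg, List.take_left, List.drop_left, hg', List.take_left, List.drop_left]
        exact skein_cons Eg1 EG1
      · simp only [Forest.comp]
        rw [hb, List.take_left, List.drop_left, hb', List.take_left, List.drop_left]
        exact skein_cons Eg2 EG2

end Lemmas5

/-- for `A = {[t,1], …, [t,k]}` (with `t` a tree with `k` leaves), an
element `(t∘f) ∘ π ∘ (t∘h)⁻¹` of `G^T` (with `π` the cyclic rotation by `c`) fixes
every point of `A` if and only if `π` is trivial and the `i`-th trees of `f` and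
`h` have equal numbers of leaves for each `i`; moreover the pointwise stabiliser
of `A` is isomorphic to `G^k` via `(f_i ∘ h_i⁻¹)_i ↦ (t∘f) ∘ (t∘h)⁻¹`. -/
theorem pointwise_stabiliser {S : Type} (R : CTree S → CTree S → Prop)
    (hR : LeafPres R)
    (hLC : LeftCancel (SkeinEquiv R)) (hOre : OreProp (SkeinEquiv R))
    (k : ℕ) (hk : 1 ≤ k) (t : CTree S) (ht : CTree.leaves t = k)
    (f h : Forest S) (hf : f.length = k) (hh : h.length = k)
    (hN : CTree.leaves (CTree.graft t f) = CTree.leaves (CTree.graft t h)) (c : ℕ) :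
    ((∀ i : ℕ, i < k →
        MLEquiv (SkeinEquiv R)
          (CTree.graft t f, (leafPos h i + c) % CTree.leaves (CTree.graft t h)) (t, i)) ↔
      (c % CTree.leaves (CTree.graft t h) = 0 ∧ ∀ i : ℕ, i < k →
        CTree.leaves (f.getD i CTree.leaf) = CTree.leaves (h.getD i CTree.leaf)))
    ∧ (∀ f' h' : Forest S, f'.length = k → h'.length = k →
        (∀ i : ℕ, i < k →
          CTree.leaves (f.getD i CTree.leaf) = CTree.leaves (h.getD i CTree.leaf)) →
        (∀ i : ℕ, i < k →
          CTree.leaves (f'.getD i CTree.leaf) = CTree.leaves (h'.getD i CTree.leaf)) →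
        (FracRel (SkeinEquiv R) (CTree.graft t f) (CTree.graft t h)
            (CTree.graft t f') (CTree.graft t h') ↔
          ∀ i : ℕ, i < k →
            FracRel (SkeinEquiv R) (f.getD i CTree.leaf) (h.getD i CTree.leaf)
              (f'.getD i CTree.leaf) (h'.getD i CTree.leaf))) := by
  have htf : t.leaves = f.length := ht.trans hf.symm
  have hth : t.leaves = h.length := ht.trans hh.symm
  set N := CTree.leaves (CTree.graft t h) with hNdef
  have hNh : N = Forest.leaves h := leaves_graft' t h hth
  have hNf : Forest.leaves f = N := by
    rw [← leaves_graft' t f htf]; exact hN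
  have hNpos : 0 < N := by
    have := length_le_leaves h
    omega
  have hhk : leafPos h k = Forest.leaves h := by
    rw [← hh]; exact leafPos_length h
  have hfk : leafPos f k = Forest.leaves f := by
    rw [← hf]; exact leafPos_length f
  constructor
  · -- Part 1
    constructor
    · -- forward
      intro hfix
      obtain ⟨p, p', hp, hp', hE⟩ := ore_tree hOre (CTree.graft t f) t
      have hplen : Forest.leaves f = p.length := by
        rw [← leaves_graft' t f htf]; exact hp
      have hEc : SkeinEquiv R (Forest.comp f p) p' := by
        apply skein_cancel_t hLC t _ _ (by rw [length_comp]; exact htf) hp'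
        rw [← graft_graft t f p htf]
        exact hE
      have hposf : ∀ i : ℕ, leafPos p (leafPos f i) = leafPos p' i := by
        intro i
        have := leafPos_map_eq (skein_pattern hR hEc) i
        rwa [leafPos_comp f p i (le_of_eq hplen)] at this
      have key : ∀ i : ℕ, i < k → (leafPos h i + c) % N = leafPos f i := by
        intro i hi
        have hml := hfix i hi
        have hpos := mlequiv_pos hR hLC hOre hml (p := p) (p' := p') hp hp' hE
        dsimp only at hpos
        rw [← hposf i] at hpos
        refine leafPos_inj p ?_ ?_ hpos
        · have := Nat.mod_lt (leafPos h i + c) hNpos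
          omega
        · have := leafPos_le_leaves f i
          omega
      have hc0 : c % N = 0 := by
        have := key 0 hk
        rw [leafPos_zero, leafPos_zero, Nat.zero_add] at this
        exact this
      refine ⟨hc0, fun i hi => ?_⟩
      have hmod : ∀ j : ℕ, j < k → (leafPos h j + c) % N = leafPos h j := by
        intro j hj
        have hlt : leafPos h j < N := by
          rw [hNh, ← hhk]
          exact leafPos_lt h hj (le_of_eq hh.symm)
        rw [Nat.add_mod, hc0, Nat.add_zero, Nat.mod_mod_of_dvd _ dvd_rfl,
          Nat.mod_eq_of_lt hlt]
      have hfeqh : ∀ j : ℕ, j ≤ k → leafPos f j = leafPos h j := by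
        intro j hj
        rcases Nat.lt_or_ge j k with hjk | hjk
        · rw [← key j hjk, hmod j hjk]
        · have : j = k := by omega
          subst this
          rw [hfk, hhk, hNf, hNh]
      have h1 := leafPos_succ f i (by omega)
      have h2 := leafPos_succ h i (by omega)
      have e1 := hfeqh i (by omega)
      have e2 := hfeqh (i+1) (by omega)
      omega
    · -- backward
      rintro ⟨hc0, hleaf⟩ i hi
      have hfeqh := leafPos_congr (f := f) (h := h) (hf.trans hh.symm)
        (fun j hj => hleaf j (by omega))
      have hlt : leafPos h i < N := by
        rw [hNh, ← hhk]
        exact leafPos_lt h hi (le_of_eq hh.symm)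
      have hmod : (leafPos h i + c) % N = leafPos f i := by
        rw [Nat.add_mod, hc0, Nat.add_zero, Nat.mod_mod_of_dvd _ dvd_rfl,
          Nat.mod_eq_of_lt hlt]
        exact (hfeqh i (by omega)).symm
      rw [hmod]
      exact Relation.EqvGen.symm _ _ (Relation.EqvGen.rel _ _ (MLRel.grow t f i htf))
  · -- Part 2
    intro f' h' hf' hh' hfh hfh'
    have htf' : t.leaves = f'.length := ht.trans hf'.symm
    have hth' : t.leaves = h'.length := ht.trans hh'.symm
    have hposfh := leafPos_congr (f := f) (h := h) (hf.trans hh.symm)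
      (fun j hj => hfh j (by omega))
    have hposfh' := leafPos_congr (f := f') (h := h') (hf'.trans hh'.symm)
      (fun j hj => hfh' j (by omega))
    constructor
    · rintro ⟨F, F', hF, hF', Etop, Ebot⟩ i hi
      have hFlen : Forest.leaves f = F.length := by
        rw [← leaves_graft' t f htf]; exact hF
      have hF'len : Forest.leaves f' = F'.length := by
        rw [← leaves_graft' t f' htf']; exact hF'
      rw [graft_graft t f F htf, graft_graft t f' F' htf'] at Etop
      rw [graft_graft t h F hth, graft_graft t h' F' hth'] at Ebot
      have EcT : SkeinEquiv R (Forest.comp f F) (Forest.comp f' F') :=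
        skein_cancel_t hLC t _ _ (by rw [length_comp]; exact htf)
          (by rw [length_comp]; exact htf') Etop
      have EcB : SkeinEquiv R (Forest.comp h F) (Forest.comp h' F') :=
        skein_cancel_t hLC t _ _ (by rw [length_comp]; exact hth)
          (by rw [length_comp]; exact hth') Ebot
      have hT := skein_getD hR EcT (i := i) (by rw [length_comp]; omega)
      have hB := skein_getD hR EcB (i := i) (by rw [length_comp]; omega)
      rw [comp_getD f F i (by omega), comp_getD f' F' i (by omega)] at hT
      rw [comp_getD h F i (by omega), comp_getD h' F' i (by omega),
        ← hposfh i (by omega), ← hposfh' i (by omega),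
        ← hfh i hi, ← hfh' i hi] at hB
      refine ⟨(F.drop (leafPos f i)).take (f.getD i CTree.leaf).leaves,
        (F'.drop (leafPos f' i)).take (f'.getD i CTree.leaf).leaves, ?_, ?_, hT, hB⟩
      · rw [List.length_take, List.length_drop]
        have h1 := leafPos_succ f i (by omega)
        have h2 := leafPos_le_leaves f (i+1)
        omega
      · rw [List.length_take, List.length_drop]
        have h1 := leafPos_succ f' i (by omega)
        have h2 := leafPos_le_leaves f' (i+1)
        omega
    · intro hrel
      obtain ⟨G, G', hG, hG', EG1, EG2⟩ := frac_join f h f' h' (hf.trans hh.symm)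
        (hf.trans hf'.symm) (hf.trans hh'.symm) (fun i hi => hfh i (by omega))
        (fun i hi => hfh' i (by omega)) (fun i hi => hrel i (by omega))
      refine ⟨G, G', ?_, ?_, ?_, ?_⟩
      · rw [leaves_graft' t f htf]; exact hG
      · rw [leaves_graft' t f' htf']; exact hG'
      · rw [graft_graft t f G htf, graft_graft t f' G' htf']
        exact skein_graft_congr EG1
      · rw [graft_graft t h G hth, graft_graft t h' G' hth']
        exact skein_graft_congr EG2


end ForestSkein
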